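/- Let G and H be connected graphs, with |V(G)|≥2. Then F(G+_Q H) = |V(H)|F(G) + |V(G)|F(H) + 6|E(H)|M₁(G) + 6|E(G)|M₁(H) + |V(H)|ξ₄(G) + 3|V(H)|ReZG(G), where G+_Q H is the Q-sum. -/

import Mathlib

open SimpleGraph Finset
open scoped Classical

noncomputable section

/-- The generalized hierarchical product `G(U)ΠH`. -/
def hierProd {α β : Type*} (G : SimpleGraph α) (H : SimpleGraph β) (U : Set α) :
    SimpleGraph (α × β) where
  Adj p q := (p.1 = q.1 ∧ p.1 ∈ U ∧ H.Adj p.2 q.2) ∨ (p.2 = q.2 ∧ G.Adj p.1 q.1)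
  symm := by
    constructor
    rintro p q (⟨h1, h2, h3⟩ | ⟨h1, h2⟩)
    · exact Or.inl ⟨h1.symm, h1 ▸ h2, h3.symm⟩
    · exact Or.inr ⟨h1.symm, h2.symm⟩
  loopless := by
    constructor
    rintro p (⟨_, _, h⟩ | ⟨_, h⟩)
    · exact H.loopless.irrefl _ h
    · exact G.loopless.irrefl _ h

/-- The F-index (forgotten topological index): sum of cubes of degrees. -/
def Findex {α : Type*} [Fintype α] (G : SimpleGraph α) : ℕ :=
  ∑ v, G.degree v ^ 3

/-- The first Zagreb index: sum of squares of degrees. -/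
def M1 {α : Type*} [Fintype α] (G : SimpleGraph α) : ℕ :=
  ∑ v, G.degree v ^ 2

/-- The general first Zagreb index with exponent `n`. -/
def xiIndex {α : Type*} [Fintype α] (G : SimpleGraph α) (n : ℕ) : ℕ :=
  ∑ v, G.degree v ^ n

/-- The redefined Zagreb index `ReZG(G) = Σ_{uv∈E} d(u)d(v)(d(u)+d(v))`. -/
def ReZG {α : Type*} [Fintype α] (G : SimpleGraph α) : ℕ :=
  ∑ e ∈ G.edgeFinset,
    Sym2.lift ⟨fun u v => G.degree u * G.degree v * (G.degree u + G.degree v),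
      fun u v => by ring⟩ e

/-- The subdivision graph `S(G)`: each edge replaced by a path of length two. -/
def Sgraph {α : Type*} (G : SimpleGraph α) : SimpleGraph (α ⊕ ↥G.edgeSet) where
  Adj x y :=
    match x, y with
    | Sum.inl u, Sum.inr e => u ∈ (e : Sym2 α)
    | Sum.inr e, Sum.inl u => u ∈ (e : Sym2 α)
    | _, _ => False
  symm := by constructor; rintro (u | e) (v | f) h <;> simp_all
  loopless := by constructor; rintro (u | e) h <;> simp_all

/-- The graph on `V(G) ⊕ E(G)` whose only edges are the original edges of `G`. -/
def Ograph {α : Type*} (G : SimpleGraph α) : SimpleGraph (α ⊕ ↥G.edgeSet) where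
  Adj x y :=
    match x, y with
    | Sum.inl u, Sum.inl v => G.Adj u v
    | _, _ => False
  symm := by constructor; rintro (u | e) (v | f) h <;> simp_all <;> exact h.symm
  loopless := by constructor; rintro (u | e) h <;> simp_all

/-- The graph on `V(G) ⊕ E(G)` whose edges join pairs of adjacent edges of `G`
(line-graph adjacency). -/
def Lgraph {α : Type*} (G : SimpleGraph α) : SimpleGraph (α ⊕ ↥G.edgeSet) where
  Adj x y :=
    match x, y with
    | Sum.inr e, Sum.inr f => e ≠ f ∧ ∃ u, u ∈ (e : Sym2 α) ∧ u ∈ (f : Sym2 α)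
    | _, _ => False
  symm := by
    constructor
    rintro (u | e) (v | f) h <;> simp_all
    exact ⟨Ne.symm h.1, h.2.imp fun u hu => hu.symm⟩
  loopless := by constructor; rintro (u | e) h <;> simp_all

/-- The triangle parallel graph `R(G)`. -/
def Rgraph {α : Type*} (G : SimpleGraph α) : SimpleGraph (α ⊕ ↥G.edgeSet) :=
  Sgraph G ⊔ Ograph G

/-- The line superposition graph `Q(G)`. -/
def Qgraph {α : Type*} (G : SimpleGraph α) : SimpleGraph (α ⊕ ↥G.edgeSet) :=
  Sgraph G ⊔ Lgraph G

/-- The total graph `T(G)`. -/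
def Tgraph {α : Type*} (G : SimpleGraph α) : SimpleGraph (α ⊕ ↥G.edgeSet) :=
  Sgraph G ⊔ Ograph G ⊔ Lgraph G

/-- The F-sum `G +_F H`, where `K` is one of `S(G), R(G), Q(G), T(G)`:
the generalized hierarchical product `K(V(G))ΠH`. -/
def FSum {α β : Type*} {G : SimpleGraph α} (K : SimpleGraph (α ⊕ ↥G.edgeSet))
    (H : SimpleGraph β) : SimpleGraph ((α ⊕ ↥G.edgeSet) × β) :=
  hierProd K H (Set.range Sum.inl)

end

noncomputable section
lemma hierProd_neighborFinset {γ β : Type*} [Fintype γ] [Fintype β]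
    (K : SimpleGraph γ) (H : SimpleGraph β) (U : Set γ) (a : γ) (b : β) :
    (hierProd K H U).neighborFinset (a, b) =
      (K.neighborFinset a ×ˢ {b}) ∪
      ({a} ×ˢ (if a ∈ U then H.neighborFinset b else ∅)) := by
  ext ⟨x, y⟩
  by_cases hU : a ∈ U
  · simp only [hU, if_true, mem_neighborFinset, mem_union, mem_product, mem_singleton]
    show ((a = x ∧ a ∈ U ∧ H.Adj b y) ∨ (b = y ∧ K.Adj a x)) ↔ _
    constructor
    · rintro (⟨h1, _, h3⟩ | ⟨h1, h2⟩)
      · exact Or.inr ⟨h1.symm, h3⟩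
      · exact Or.inl ⟨h2, h1.symm⟩
    · rintro (⟨h1, h2⟩ | ⟨h1, h2⟩)
      · exact Or.inr ⟨h2.symm, h1⟩
      · exact Or.inl ⟨h1.symm, hU, h2⟩
  · simp only [hU, if_false, mem_neighborFinset, mem_union, mem_product, mem_singleton,
      notMem_empty, and_false, or_false]
    show ((a = x ∧ a ∈ U ∧ H.Adj b y) ∨ (b = y ∧ K.Adj a x)) ↔ _
    constructor
    · rintro (⟨_, h2, _⟩ | ⟨h1, h2⟩)
      · exact absurd h2 hU
      · exact ⟨h2, h1.symm⟩
    · rintro ⟨h1, h2⟩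
      exact Or.inr ⟨h2.symm, h1⟩

lemma hierProd_degree {γ β : Type*} [Fintype γ] [Fintype β]
    (K : SimpleGraph γ) (H : SimpleGraph β) (U : Set γ) (a : γ) (b : β) :
    (hierProd K H U).degree (a, b) = K.degree a + (if a ∈ U then H.degree b else 0) := by
  rw [degree, hierProd_neighborFinset, card_union_of_disjoint, card_product, card_product]
  · by_cases hU : a ∈ U
    · rw [if_pos hU, if_pos hU, card_singleton, card_singleton, mul_one, one_mul, degree, degree]
    · rw [if_neg hU, if_neg hU, card_singleton, mul_one, card_empty, mul_zero, degree]
  · rw [Finset.disjoint_left]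
    rintro ⟨x, y⟩ h1 h2
    simp only [mem_product, mem_singleton, mem_neighborFinset] at h1 h2
    exact K.loopless.irrefl a (h2.1 ▸ h1.1)
end
noncomputable section
variable {α : Type*} [Fintype α] (G : SimpleGraph α)

lemma sum_edge_subtype {M : Type*} [AddCommMonoid M] (g : Sym2 α → M) :
    ∑ f : ↥G.edgeSet, g ↑f = ∑ f ∈ G.edgeFinset, g f := by
  rw [Finset.sum_subtype G.edgeFinset (fun x => G.mem_edgeFinset) g]

lemma Qgraph_degree_inl (u : α) :
    (Qgraph G).degree (Sum.inl u : α ⊕ ↥G.edgeSet) = G.degree u := by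
  classical
  rw [degree, neighborFinset_eq_filter, Finset.card_filter, Fintype.sum_sum_type]
  have h1 : ∀ a : α, (if (Qgraph G).Adj (Sum.inl u) (Sum.inl a) then 1 else 0) = 0 := by
    intro a
    simp [Qgraph, Sgraph, Lgraph]
  have h2 : ∀ e : ↥G.edgeSet, (if (Qgraph G).Adj (Sum.inl u) (Sum.inr e) then 1 else 0)
      = if u ∈ (e : Sym2 α) then 1 else 0 := by
    intro e
    simp [Qgraph, Sgraph, Lgraph]
  simp only [h1, h2, Finset.sum_const_zero, zero_add]
  calc (∑ e : ↥G.edgeSet, if u ∈ (e : Sym2 α) then 1 else 0)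
      = ∑ f ∈ G.edgeFinset, (if u ∈ f then 1 else 0) := sum_edge_subtype G (fun f => if u ∈ f then 1 else 0)
    _ = #(G.edgeFinset.filter (fun f => u ∈ f)) := (Finset.card_filter _ _).symm
    _ = #(G.incidenceFinset u) := by rw [G.incidenceFinset_eq_filter u]
    _ = G.degree u := G.card_incidenceFinset_eq_degree u
end
noncomputable section
variable {α : Type*} [Fintype α] (G : SimpleGraph α)

lemma Qgraph_degree_inr_mk (u v : α) (he : s(u,v) ∈ G.edgeSet) :
    (Qgraph G).degree (Sum.inr ⟨s(u,v), he⟩ : α ⊕ ↥G.edgeSet) = G.degree u + G.degree v := by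
  classical
  have hadj : G.Adj u v := G.mem_edgeSet.mp he
  have hne : u ≠ v := hadj.ne
  rw [degree, neighborFinset_eq_filter, Finset.card_filter, Fintype.sum_sum_type]
  have h1 : ∀ a : α,
      (if (Qgraph G).Adj (Sum.inr ⟨s(u,v), he⟩) (Sum.inl a) then 1 else 0)
      = if a ∈ s(u,v) then 1 else 0 := by
    intro a; simp [Qgraph, Sgraph, Lgraph]
  have h2 : ∀ f : ↥G.edgeSet,
      (if (Qgraph G).Adj (Sum.inr ⟨s(u,v), he⟩) (Sum.inr f) then 1 else 0)
      = if ((f : Sym2 α) ≠ s(u,v) ∧ (u ∈ (f : Sym2 α) ∨ v ∈ (f : Sym2 α))) then 1 else 0 := by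
    rintro ⟨f, hf⟩
    have : (Qgraph G).Adj (Sum.inr ⟨s(u,v), he⟩) (Sum.inr ⟨f, hf⟩) ↔
        (f ≠ s(u,v) ∧ (u ∈ f ∨ v ∈ f)) := by
      show ((False ∨ _) ↔ _)
      rw [false_or]
      show ((⟨s(u,v), he⟩ : ↥G.edgeSet) ≠ ⟨f, hf⟩ ∧ ∃ w, w ∈ s(u,v) ∧ w ∈ f) ↔ _
      constructor
      · rintro ⟨hne', w, hw1, hw2⟩
        refine ⟨fun hh => hne' (by simp [hh]), ?_⟩
        rcases Sym2.mem_iff.mp hw1 with rfl | rfl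
        · exact Or.inl hw2
        · exact Or.inr hw2
      · rintro ⟨hne', (hu | hv)⟩
        · exact ⟨fun hh => hne' (congrArg Subtype.val hh).symm, u, by simp, hu⟩
        · exact ⟨fun hh => hne' (congrArg Subtype.val hh).symm, v, by simp, hv⟩
    simp [this]
  simp only [h1, h2]
  have part1 : (∑ a : α, if a ∈ s(u,v) then 1 else 0) = 2 := by
    rw [← Finset.card_filter]
    have : Finset.univ.filter (fun a => a ∈ s(u,v)) = {u, v} := by
      ext a; simp [Sym2.mem_iff]
    rw [this, Finset.card_pair hne]
  have part2 : (∑ f : ↥G.edgeSet,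
      if ((f : Sym2 α) ≠ s(u,v) ∧ (u ∈ (f : Sym2 α) ∨ v ∈ (f : Sym2 α))) then 1 else 0)
      = G.degree u + G.degree v - 2 := by
    rw [sum_edge_subtype G (fun f => if (f ≠ s(u,v) ∧ (u ∈ f ∨ v ∈ f)) then 1 else 0),
      ← Finset.card_filter]
    have hsplit : G.edgeFinset.filter (fun f => f ≠ s(u,v) ∧ (u ∈ f ∨ v ∈ f))
        = (G.edgeFinset.filter (fun f => u ∈ f ∨ v ∈ f)).erase (s(u,v)) := by
      ext f; simp only [Finset.mem_filter, Finset.mem_erase]; tauto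
    have hunion : G.edgeFinset.filter (fun f => u ∈ f ∨ v ∈ f)
        = G.incidenceFinset u ∪ G.incidenceFinset v := by
      ext f
      simp only [Finset.mem_filter, Finset.mem_union, mem_incidenceFinset,
        SimpleGraph.incidenceSet, Set.mem_sep_iff, mem_edgeFinset, Set.mem_setOf_eq,
        mem_edgeSet]
      constructor
      · rintro ⟨h1', h2' | h2'⟩
        · exact Or.inl ⟨h1', h2'⟩
        · exact Or.inr ⟨h1', h2'⟩
      · rintro (⟨h1', h2'⟩ | ⟨h1', h2'⟩)
        · exact ⟨h1', Or.inl h2'⟩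
        · exact ⟨h1', Or.inr h2'⟩
    have hinter : G.incidenceFinset u ∩ G.incidenceFinset v = {s(u,v)} := by
      ext f
      simp only [Finset.mem_inter, mem_incidenceFinset, SimpleGraph.incidenceSet,
        Set.mem_sep_iff, Finset.mem_singleton]
      constructor
      · rintro ⟨⟨_, hf2⟩, ⟨_, hf3⟩⟩
        exact (Sym2.mem_and_mem_iff hne).mp ⟨hf2, hf3⟩
      · rintro rfl
        exact ⟨⟨he, by simp⟩, ⟨he, by simp⟩⟩
    have hcu : #(G.incidenceFinset u ∪ G.incidenceFinset v) = G.degree u + G.degree v - 1 := by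
      have h' := Finset.card_union_add_card_inter (G.incidenceFinset u) (G.incidenceFinset v)
      rw [hinter, Finset.card_singleton, card_incidenceFinset_eq_degree,
        card_incidenceFinset_eq_degree] at h'
      omega
    have hmem : s(u,v) ∈ G.edgeFinset.filter (fun f => u ∈ f ∨ v ∈ f) := by
      simp [mem_edgeFinset, hadj]
    rw [hsplit, Finset.card_erase_of_mem hmem, hunion, hcu]
    omega
  rw [part1, part2]
  have hdu : 0 < G.degree u := by
    rw [G.degree_pos_iff_exists_adj]; exact ⟨v, hadj⟩
  have hdv : 0 < G.degree v := by
    rw [G.degree_pos_iff_exists_adj]; exact ⟨u, hadj.symm⟩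
  omega

lemma Qgraph_degree_inr (e : ↥G.edgeSet) :
    (Qgraph G).degree (Sum.inr e : α ⊕ ↥G.edgeSet)
      = Sym2.lift ⟨fun u v => G.degree u + G.degree v, fun u v => by ring⟩ ↑e := by
  obtain ⟨e, he⟩ := e
  induction e using Sym2.inductionOn with
  | hf u v => simpa using Qgraph_degree_inr_mk G u v he
end
noncomputable section
variable {α : Type*} [Fintype α] (G : SimpleGraph α)

lemma sum_lift_add (f : α → ℕ) :
    ∑ e ∈ G.edgeFinset, Sym2.lift ⟨fun u v => f u + f v, fun u v => by ring⟩ e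
      = ∑ v, G.degree v * f v := by
  classical
  have step : ∀ e ∈ G.edgeFinset,
      Sym2.lift ⟨fun u v => f u + f v, fun u v => by ring⟩ e
        = ∑ w : α, if w ∈ e then f w else 0 := by
    intro e he
    rw [mem_edgeFinset] at he
    induction e using Sym2.inductionOn with
    | hf u v =>
      have hne : u ≠ v := (G.mem_edgeSet.mp he).ne
      rw [Sym2.lift_mk, ← Finset.sum_filter]
      have : Finset.univ.filter (fun w => w ∈ s(u,v)) = {u, v} := by
        ext w; simp [Sym2.mem_iff]
      rw [this, Finset.sum_pair hne]
  rw [Finset.sum_congr rfl step, Finset.sum_comm]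
  refine Finset.sum_congr rfl fun w _ => ?_
  rw [← Finset.sum_filter, Finset.sum_const, smul_eq_mul,
    ← G.incidenceFinset_eq_filter w, card_incidenceFinset_eq_degree]
end

theorem Findex_Qsum' {α β : Type*} [Fintype α] [Fintype β]
    (G : SimpleGraph α) (H : SimpleGraph β)
    (hcard : 2 ≤ Fintype.card α) (hG : G.Connected) (hH : H.Connected) :
    Findex (FSum (Qgraph G) H) =
      Fintype.card β * Findex G + Fintype.card α * Findex H
        + 6 * H.edgeFinset.card * M1 G + 6 * G.edgeFinset.card * M1 H
        + Fintype.card β * xiIndex G 4 + 3 * Fintype.card β * ReZG G := by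
  classical
  have dinl : ∀ (a : α) (b : β),
      (FSum (Qgraph G) H).degree (Sum.inl a, b) = G.degree a + H.degree b := by
    intro a b
    rw [FSum, hierProd_degree, if_pos ⟨a, rfl⟩, Qgraph_degree_inl]
  have dinr : ∀ (e : ↥G.edgeSet) (b : β),
      (FSum (Qgraph G) H).degree (Sum.inr e, b)
        = Sym2.lift ⟨fun u v => G.degree u + G.degree v, fun u v => by ring⟩ ↑e := by
    intro e b
    rw [FSum, hierProd_degree, if_neg, Qgraph_degree_inr, add_zero]
    rintro ⟨a, h⟩
    exact Sum.inl_ne_inr h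
  -- inner sum for inl part
  have inner : ∀ c : ℕ, ∑ b : β, (c + H.degree b)^3
      = Fintype.card β * c^3 + 3*c^2*(2*#H.edgeFinset) + 3*c*(M1 H) + Findex H := by
    intro c
    have e1 : ∑ b : β, (c + H.degree b)^3
        = ∑ b : β, (c^3 + ((3*c^2)*H.degree b + ((3*c)*H.degree b^2 + H.degree b^3))) :=
      Finset.sum_congr rfl fun b _ => by ring
    rw [e1, Finset.sum_add_distrib, Finset.sum_add_distrib, Finset.sum_add_distrib,
      Finset.sum_const, ← Finset.mul_sum, ← Finset.mul_sum,
      H.sum_degrees_eq_twice_card_edges, smul_eq_mul, Finset.card_univ]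
    unfold M1 Findex
    ring
  have A : ∑ a : α, ∑ b : β, ((FSum (Qgraph G) H).degree (Sum.inl a, b))^3
      = Fintype.card β * Findex G + Fintype.card α * Findex H
        + 3 * M1 G * (2*#H.edgeFinset) + 3 * (2*#G.edgeFinset) * M1 H := by
    rw [Finset.sum_congr rfl (fun a _ => by
      rw [Finset.sum_congr rfl (fun b _ => by rw [dinl a b]), inner (G.degree a)])]
    rw [Finset.sum_add_distrib, Finset.sum_add_distrib, Finset.sum_add_distrib,
      Finset.sum_const, ← Finset.mul_sum, ← Finset.sum_mul, ← Finset.mul_sum,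
      ← Finset.sum_mul, ← Finset.mul_sum,
      G.sum_degrees_eq_twice_card_edges, smul_eq_mul, Finset.card_univ]
    unfold M1 Findex
    ring
  have B : ∑ e : ↥G.edgeSet, ∑ b : β, ((FSum (Qgraph G) H).degree (Sum.inr e, b))^3
      = Fintype.card β * (xiIndex G 4 + 3 * ReZG G) := by
    have hconst : ∀ e : ↥G.edgeSet, ∑ b : β, ((FSum (Qgraph G) H).degree (Sum.inr e, b))^3
        = Fintype.card β *
          (Sym2.lift ⟨fun u v => G.degree u + G.degree v, fun u v => by ring⟩ (↑e : Sym2 α))^3 := by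
      intro e
      rw [Finset.sum_congr rfl (fun b _ => by rw [dinr e b]), Finset.sum_const,
        smul_eq_mul, Finset.card_univ]
    rw [Finset.sum_congr rfl (fun e _ => hconst e), ← Finset.mul_sum]
    congr 1
    rw [sum_edge_subtype G (fun f =>
      (Sym2.lift ⟨fun u v => G.degree u + G.degree v, fun u v => by ring⟩ f)^3)]
    have split : ∀ f : Sym2 α,
        (Sym2.lift ⟨fun u v => G.degree u + G.degree v, fun u v => by ring⟩ f)^3
        = Sym2.lift ⟨fun u v => (fun w => G.degree w ^ 3) u + (fun w => G.degree w ^ 3) v,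
            fun u v => by ring⟩ f
          + 3 * Sym2.lift ⟨fun u v => G.degree u * G.degree v * (G.degree u + G.degree v),
              fun u v => by ring⟩ f := by
      intro f
      induction f using Sym2.inductionOn with
      | hf u v => simp only [Sym2.lift_mk]; ring
    rw [Finset.sum_congr rfl (fun f _ => split f), Finset.sum_add_distrib,
      ← Finset.mul_sum, sum_lift_add G (fun w => G.degree w ^ 3)]
    have h4 : ∑ v, G.degree v * G.degree v ^ 3 = xiIndex G 4 := by
      unfold xiIndex
      exact Finset.sum_congr rfl fun v _ => by ring
    rw [h4]
    rfl
  unfold Findex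
  rw [Fintype.sum_prod_type, Fintype.sum_sum_type, A, B]
  unfold Findex
  ring

theorem Findex_Qsum {α β : Type*} [Fintype α] [Fintype β]
    (G : SimpleGraph α) (H : SimpleGraph β)
    (hcard : 2 ≤ Fintype.card α) (hG : G.Connected) (hH : H.Connected) :
    Findex (FSum (Qgraph G) H) =
      Fintype.card β * Findex G + Fintype.card α * Findex H
        + 6 * H.edgeFinset.card * M1 G + 6 * G.edgeFinset.card * M1 H
        + Fintype.card β * xiIndex G 4 + 3 * Fintype.card β * ReZG G :=
  Findex_Qsum' G H hcard hG hH
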